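/- Let m(u) = f + g·u + (1/2)u·H·u + (σ/3)‖u‖³ with σ > 0, and suppose u satisfies ∇m(u)·u ≤ δσ‖u‖³ for δ ∈ (0, 1/6). Then m(0) - m(u) ≥ (1/2)u·H·u + (2/3 - δ)σ‖u‖³. -/
import Mathlib


open Matrix Real BigOperators RealInnerProductSpace

/-- Euclidean norm of a finite-dimensional real vector. -/
noncomputable def eunorm {ι : Type*} [Fintype ι] (x : ι → ℝ) : ℝ :=
  Real.sqrt (∑ i, x i ^ 2)

/-- ℓ¹ norm of a finite-dimensional real vector. -/
noncomputable def l1norm {ι : Type*} [Fintype ι] (x : ι → ℝ) : ℝ :=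
  ∑ i, |x i|

lemma eunorm_zero {ι : Type*} [Fintype ι] : eunorm (0 : ι → ℝ) = 0 := by
  simp [eunorm]

lemma eunorm_sq {ι : Type*} [Fintype ι] (x : ι → ℝ) : eunorm x ^ 2 = x ⬝ᵥ x := by
  rw [eunorm, Real.sq_sqrt (Finset.sum_nonneg fun i _ => sq_nonneg _)]
  simp [dotProduct, sq]

theorem stmt2 {n : ℕ} (f σ δ : ℝ) (g u : Fin n → ℝ) (H : Matrix (Fin n) (Fin n) ℝ)
    (hH : H.IsSymm) (hσ : 0 < σ) (hδ0 : 0 < δ) (hδ1 : δ < 1 / 6)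
    (m : (Fin n → ℝ) → ℝ)
    (hm : ∀ d, m d = f + g ⬝ᵥ d + (1 / 2) * (d ⬝ᵥ H.mulVec d) + (σ / 3) * (eunorm d) ^ 3)
    (hgradu : (g + H.mulVec u + (σ * eunorm u) • u) ⬝ᵥ u ≤ δ * σ * (eunorm u) ^ 3) :
    m 0 - m u ≥ (1 / 2) * (u ⬝ᵥ H.mulVec u) + (2 / 3 - δ) * σ * (eunorm u) ^ 3 := by
  have h0 : m 0 = f := by
    rw [hm]; simp [eunorm_zero]
  have key : g ⬝ᵥ u + u ⬝ᵥ H.mulVec u + σ * eunorm u ^ 3 ≤ δ * σ * eunorm u ^ 3 := by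
    have h1 : (g + H.mulVec u + (σ * eunorm u) • u) ⬝ᵥ u
        = g ⬝ᵥ u + H.mulVec u ⬝ᵥ u + (σ * eunorm u) * (u ⬝ᵥ u) := by
      simp [add_dotProduct, smul_dotProduct]
    have h2 : H.mulVec u ⬝ᵥ u = u ⬝ᵥ H.mulVec u := dotProduct_comm _ _
    have h3 : (σ * eunorm u) * (u ⬝ᵥ u) = σ * eunorm u ^ 3 := by
      rw [← eunorm_sq]; ring
    rw [h1, h2, h3] at hgradu
    exact hgradu
  rw [hm u, h0]
  nlinarith [key]
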